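/- The asymptotic probability of 1-fragility of a golden game exists and satisfies lim_{n→∞} F_n(1) = 1 − φ·ξ − φ²·ξ², where ξ is the unique root in the open interval (0,1) of the equation x = φ³ + 2φ²x² (the smaller root of the quadratic φ³ − x + 2φ²x²). -/
import Mathlib


open Filter Topology

/-- The golden ratio `φ = (√5 − 1)/2`. -/
noncomputable def phi : ℝ := (Real.sqrt 5 - 1) / 2

/-- Backward-induction value of the win-lose game of depth `n` on the complete binary tree:
`V_0(a) = a 0`; for `n ≥ 1`, the value is the `AND` of the values of the two depth-`(n−1)`
subtrees if `n` is odd (Player 2, the minimizer, moves) and the `OR` if `n` is even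
(Player 1, the maximizer, moves).  Player 2 moves last. -/
def gameValue : (n : ℕ) → (Fin (2 ^ n) → Bool) → Bool
  | 0, a => a 0
  | n + 1, a =>
      have h : 2 ^ (n + 1) = 2 ^ n + 2 ^ n := by rw [pow_succ]; omega
      let aL : Fin (2 ^ n) → Bool := fun i => a ⟨i.1, by have := i.2; omega⟩
      let aR : Fin (2 ^ n) → Bool := fun i => a ⟨i.1 + 2 ^ n, by have := i.2; omega⟩
      if (n + 1) % 2 = 1 then gameValue n aL && gameValue n aR
      else gameValue n aL || gameValue n aR

/-- `μ_{n,p}(S)`: the probability of a set `S` of depth-`n` games when the `2^n` payoffs are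
i.i.d. Bernoulli, each `true` with probability `p`. -/
noncomputable def prob (n : ℕ) (p : ℝ) (S : Set (Fin (2 ^ n) → Bool)) : ℝ :=
  ∑ a : Fin (2 ^ n) → Bool, S.indicator (fun a => ∏ i, if a i then p else 1 - p) a

/-- A game `a` of depth `n` is `d`-fragile if there is a game `a'` at Hamming distance at most
`d` from `a` whose value differs from that of `a`. -/
def Fragile (n d : ℕ) (a : Fin (2 ^ n) → Bool) : Prop :=
  ∃ a' : Fin (2 ^ n) → Bool, hammingDist a a' ≤ d ∧ gameValue n a' ≠ gameValue n a

/-- `F_n(d,p)`: the probability that a depth-`n` random game with parameter `p` is `d`-fragile. -/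
noncomputable def fragProb (n d : ℕ) (p : ℝ) : ℝ := prob n p {a | Fragile n d a}

section Aux

lemma phi_sq : phi ^ 2 = 1 - phi := by
  have h5 : Real.sqrt 5 ^ 2 = 5 := Real.sq_sqrt (by norm_num)
  unfold phi; nlinarith [h5]

lemma phi_pos : 0 < phi := by
  have : (1:ℝ) < Real.sqrt 5 := by
    have := Real.lt_sqrt (x := 1) (y := 5) (by norm_num)
    simp at this; nlinarith [Real.sq_sqrt (show (0:ℝ) ≤ 5 by norm_num),
      Real.sqrt_nonneg 5, Real.sqrt_lt_sqrt (show (0:ℝ) ≤ 1 by norm_num) (show (1:ℝ) < 5 by norm_num)]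
  unfold phi; linarith

lemma phi_lt_one : phi < 1 := by
  nlinarith [phi_sq, phi_pos]

lemma phi_le : phi ≤ 5/8 := by
  nlinarith [phi_sq, phi_pos]

/-- glue two depth-n games into a depth-(n+1) game -/
def glue (n : ℕ) (x y : Fin (2 ^ n) → Bool) : Fin (2 ^ (n + 1)) → Bool :=
  fun i => if h : i.1 < 2 ^ n then x ⟨i.1, h⟩
    else y ⟨i.1 - 2 ^ n, by have := i.2; simp only [pow_succ] at this; omega⟩

lemma glue_left (n : ℕ) (x y : Fin (2 ^ n) → Bool) (i : Fin (2 ^ (n+1))) (h : i.1 < 2 ^ n) :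
    glue n x y i = x ⟨i.1, h⟩ := by
  simp [glue, h]

lemma glue_right (n : ℕ) (x y : Fin (2 ^ n) → Bool) (i : Fin (2 ^ (n+1))) (h : ¬ i.1 < 2 ^ n) :
    glue n x y i = y ⟨i.1 - 2 ^ n, by have := i.2; simp only [pow_succ] at this; omega⟩ := by
  simp [glue, h]

/-- the equivalence between pairs of depth-n games and depth-(n+1) games -/
def glueEquiv (n : ℕ) : ((Fin (2 ^ n) → Bool) × (Fin (2 ^ n) → Bool)) ≃ (Fin (2 ^ (n + 1)) → Bool) where
  toFun p := glue n p.1 p.2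
  invFun a := (fun i => a ⟨i.1, by have := i.2; rw [pow_succ]; omega⟩,
               fun i => a ⟨i.1 + 2 ^ n, by have := i.2; rw [pow_succ]; omega⟩)
  left_inv p := by
    ext i
    · simp [glue]
    · have h : ¬ (i.1 + 2 ^ n < 2 ^ n) := by omega
      simp [glue, h]
  right_inv a := by
    funext i
    by_cases h : i.1 < 2 ^ n
    · simp [glue, h]
    · have h2 : i.1 - 2 ^ n + 2 ^ n = i.1 := by omega
      simp only [glue, dif_neg h]
      congr 1
      exact Fin.ext h2

lemma sum_split (n : ℕ) (f : (Fin (2 ^ (n + 1)) → Bool) → ℝ) :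
    ∑ a : Fin (2 ^ (n+1)) → Bool, f a
      = ∑ x : Fin (2 ^ n) → Bool, ∑ y : Fin (2 ^ n) → Bool, f (glue n x y) := by
  rw [← Equiv.sum_comp (glueEquiv n) f, Fintype.sum_prod_type]
  rfl

lemma val_glue (n : ℕ) (x y : Fin (2 ^ n) → Bool) :
    gameValue (n + 1) (glue n x y)
      = if (n + 1) % 2 = 1 then gameValue n x && gameValue n y
        else gameValue n x || gameValue n y := by
  have hL : (fun i : Fin (2 ^ n) => glue n x y ⟨i.1, by have := i.2; rw [pow_succ]; omega⟩) = x := by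
    funext i; simp [glue]
  have hR : (fun i : Fin (2 ^ n) => glue n x y ⟨i.1 + 2 ^ n, by have := i.2; rw [pow_succ]; omega⟩) = y := by
    funext i
    have h : ¬ (i.1 + 2 ^ n < 2 ^ n) := by omega
    simp [glue, h]
  rw [gameValue]
  simp only [hL, hR]

end Aux
/-- weight of a game -/
noncomputable def W (n : ℕ) (a : Fin (2 ^ n) → Bool) : ℝ :=
  ∏ i, if a i then phi else 1 - phi

/-- index equivalence -/
def sumEquiv (n : ℕ) : Fin (2 ^ n) ⊕ Fin (2 ^ n) ≃ Fin (2 ^ (n + 1)) :=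
  finSumFinEquiv.trans (finCongr (by rw [pow_succ]; omega))

lemma sumEquiv_inl (n : ℕ) (i : Fin (2 ^ n)) : (sumEquiv n (Sum.inl i)).1 = i.1 := rfl

lemma sumEquiv_inr (n : ℕ) (i : Fin (2 ^ n)) : (sumEquiv n (Sum.inr i)).1 = 2 ^ n + i.1 := rfl

lemma W_glue (n : ℕ) (x y : Fin (2 ^ n) → Bool) :
    W (n + 1) (glue n x y) = W n x * W n y := by
  rw [W, ← (sumEquiv n).prod_comp, Fintype.prod_sum_type]
  congr 1
  · apply Finset.prod_congr rfl; intro i _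
    have h : (sumEquiv n (Sum.inl i)).1 < 2 ^ n := by rw [sumEquiv_inl]; exact i.2
    rw [glue_left n x y _ h]
    exact congrArg (fun z => if x z then phi else 1 - phi) (Fin.ext rfl)
  · apply Finset.prod_congr rfl; intro i _
    have h : ¬ (sumEquiv n (Sum.inr i)).1 < 2 ^ n := by rw [sumEquiv_inr]; omega
    rw [glue_right n x y _ h]
    refine congrArg (fun z => if y z then phi else 1 - phi) (Fin.ext ?_)
    show (sumEquiv n (Sum.inr i)).1 - 2 ^ n = i.1
    rw [sumEquiv_inr]; omega

lemma W_total (n : ℕ) : ∑ a : Fin (2 ^ n) → Bool, W n a = 1 := by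
  induction n with
  | zero =>
    haveI : Unique (Fin (2 ^ 0)) := inferInstanceAs (Unique (Fin 1))
    rw [Fintype.sum_equiv (Equiv.funUnique (Fin (2 ^ 0)) Bool) _
      (fun b => if b then phi else 1 - phi) (fun a => by rw [W]; exact Fintype.prod_unique _)]
    simp
  | succ n ih =>
    rw [sum_split n (W (n + 1))]
    calc ∑ x : Fin (2 ^ n) → Bool, ∑ y : Fin (2 ^ n) → Bool, W (n+1) (glue n x y)
        = ∑ x : Fin (2 ^ n) → Bool, ∑ y : Fin (2 ^ n) → Bool, W n x * W n y := by
          apply Finset.sum_congr rfl; intro x _; apply Finset.sum_congr rfl; intro y _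
          exact W_glue n x y
      _ = 1 := by rw [← Finset.sum_mul_sum, ih, one_mul]

/-- left embedding -/
def inL (n : ℕ) (j : Fin (2 ^ n)) : Fin (2 ^ (n + 1)) :=
  ⟨j.1, by have := j.2; simp only [pow_succ]; omega⟩

/-- right embedding -/
def inR (n : ℕ) (j : Fin (2 ^ n)) : Fin (2 ^ (n + 1)) :=
  ⟨j.1 + 2 ^ n, by have := j.2; simp only [pow_succ]; omega⟩

lemma glue_inL (n : ℕ) (x y : Fin (2 ^ n) → Bool) (j : Fin (2 ^ n)) :
    glue n x y (inL n j) = x j := by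
  rw [glue_left n x y _ (show (inL n j).1 < 2 ^ n from j.2)]
  exact congrArg x (Fin.ext rfl)

lemma glue_inR (n : ℕ) (x y : Fin (2 ^ n) → Bool) (j : Fin (2 ^ n)) :
    glue n x y (inR n j) = y j := by
  rw [glue_right n x y _ (show ¬ (inR n j).1 < 2 ^ n by simp [inR])]
  refine congrArg y (Fin.ext ?_)
  show (inR n j).1 - 2 ^ n = j.1
  simp [inR]

lemma update_glue_left (n : ℕ) (x y : Fin (2 ^ n) → Bool) (j : Fin (2 ^ n)) (b : Bool) :
    Function.update (glue n x y) (inL n j) b = glue n (Function.update x j b) y := by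
  funext k
  by_cases hk : k.1 < 2 ^ n
  · rw [glue_left n _ y k hk]
    by_cases hkj : k = inL n j
    · subst hkj
      rw [Function.update_self]
      have h3 : (⟨(inL n j).1, hk⟩ : Fin (2 ^ n)) = j := Fin.ext rfl
      rw [h3, Function.update_self]
    · have h2 : (⟨k.1, hk⟩ : Fin (2 ^ n)) ≠ j := by
        intro h
        have hv : k.1 = j.1 := congrArg Fin.val h
        exact hkj (Fin.ext hv)
      rw [Function.update_of_ne hkj, Function.update_of_ne h2, glue_left n x y k hk]
  · have hkj : k ≠ inL n j := by
      intro h; apply hk; rw [h]; exact j.2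
    rw [Function.update_of_ne hkj, glue_right n x y k hk, glue_right n (Function.update x j b) y k hk]

lemma update_glue_right (n : ℕ) (x y : Fin (2 ^ n) → Bool) (j : Fin (2 ^ n)) (b : Bool) :
    Function.update (glue n x y) (inR n j) b = glue n x (Function.update y j b) := by
  funext k
  by_cases hk : k.1 < 2 ^ n
  · have hkj : k ≠ inR n j := by
      intro h
      have : k.1 = j.1 + 2 ^ n := congrArg Fin.val h
      omega
    rw [Function.update_of_ne hkj, glue_left n x y k hk, glue_left n x (Function.update y j b) k hk]
  · rw [glue_right n x _ k hk]
    by_cases hkj : k = inR n j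
    · subst hkj
      rw [Function.update_self]
      have h3 : (⟨(inR n j).1 - 2 ^ n, by have := (inR n j).2; simp only [pow_succ] at this; omega⟩
          : Fin (2 ^ n)) = j := by
        apply Fin.ext
        show (inR n j).1 - 2 ^ n = j.1
        simp [inR]
      rw [h3, Function.update_self]
    · have h2 : (⟨k.1 - 2 ^ n, by have := k.2; simp only [pow_succ] at this; omega⟩
          : Fin (2 ^ n)) ≠ j := by
        intro h
        apply hkj; apply Fin.ext
        have h3 : k.1 - 2 ^ n = j.1 := congrArg Fin.val h
        show k.1 = j.1 + 2 ^ n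
        omega
      rw [Function.update_of_ne hkj, Function.update_of_ne h2, glue_right n x y k hk]

lemma exists_fin_split (n : ℕ) (P : Fin (2 ^ (n + 1)) → Prop) :
    (∃ i, P i) ↔ (∃ j : Fin (2 ^ n), P (inL n j)) ∨ (∃ j : Fin (2 ^ n), P (inR n j)) := by
  constructor
  · rintro ⟨i, hi⟩
    by_cases h : i.1 < 2 ^ n
    · left
      refine ⟨⟨i.1, h⟩, ?_⟩
      have : inL n ⟨i.1, h⟩ = i := Fin.ext rfl
      rwa [this]
    · right
      refine ⟨⟨i.1 - 2 ^ n, by have := i.2; simp only [pow_succ] at this; omega⟩, ?_⟩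
      have : inR n ⟨i.1 - 2 ^ n, by have := i.2; simp only [pow_succ] at this; omega⟩ = i := by
        apply Fin.ext
        show i.1 - 2 ^ n + 2 ^ n = i.1
        omega
      rwa [this]
  · rintro (⟨j, hj⟩ | ⟨j, hj⟩)
    · exact ⟨_, hj⟩
    · exact ⟨_, hj⟩
/-- there is a pivotal coordinate -/
def pivP (n : ℕ) (a : Fin (2 ^ n) → Bool) : Prop :=
  ∃ i, gameValue n (Function.update a i (!(a i))) ≠ gameValue n a

instance (n : ℕ) (a : Fin (2 ^ n) → Bool) : Decidable (pivP n a) := by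
  unfold pivP; infer_instance

lemma pivP_zero (a : Fin (2 ^ 0) → Bool) : pivP 0 a := by
  haveI : Subsingleton (Fin (2 ^ 0)) := inferInstanceAs (Subsingleton (Fin 1))
  refine ⟨⟨0, by norm_num⟩, ?_⟩
  simp only [gameValue]
  have h0 : (0 : Fin (2 ^ 0)) = ⟨0, by norm_num⟩ := Subsingleton.elim _ _
  rw [h0, Function.update_self]
  exact Bool.not_ne_self _

lemma pivP_glue (n : ℕ) (x y : Fin (2 ^ n) → Bool) :
    pivP (n + 1) (glue n x y) ↔
      (if (n + 1) % 2 = 1 then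
        (gameValue n y = true ∧ pivP n x) ∨ (gameValue n x = true ∧ pivP n y)
      else
        (gameValue n y = false ∧ pivP n x) ∨ (gameValue n x = false ∧ pivP n y)) := by
  rw [pivP, exists_fin_split]
  simp_rw [glue_inL, glue_inR, update_glue_left, update_glue_right, val_glue]
  by_cases hpar : (n + 1) % 2 = 1
  · simp only [if_pos hpar]
    cases hy : gameValue n y <;> cases hx : gameValue n x <;> simp [pivP, hx, hy]
  · simp only [if_neg hpar]
    cases hy : gameValue n y <;> cases hx : gameValue n x <;> simp [pivP, hx, hy]

lemma fragile_iff (n : ℕ) (a : Fin (2 ^ n) → Bool) : Fragile n 1 a ↔ pivP n a := by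
  constructor
  · rintro ⟨a', hd, hv⟩
    have hne : a' ≠ a := fun h => hv (by rw [h])
    have hpos : 0 < hammingDist a a' := by
      rcases Nat.eq_zero_or_pos (hammingDist a a') with h | h
      · exact absurd (eq_of_hammingDist_eq_zero h).symm hne
      · exact h
    have hone : hammingDist a a' = 1 := le_antisymm hd hpos
    -- the differing set is a singleton
    rw [hammingDist] at hone
    obtain ⟨i, hi⟩ := Finset.card_eq_one.mp hone
    have hmem : ∀ j, a j ≠ a' j ↔ j = i := by
      intro j
      constructor
      · intro hj
        have : j ∈ ({i} : Finset (Fin (2 ^ n))) := by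
          rw [← hi]; simp [hj]
        simpa using this
      · intro hj
        subst hj
        have : j ∈ Finset.filter (fun k => a k ≠ a' k) Finset.univ := by
          rw [hi]; simp
        simpa using this
    have hai : a' i = !(a i) := by
      have := (hmem i).mpr rfl
      cases h : a i <;> cases h' : a' i <;> simp_all
    have ha' : a' = Function.update a i (!(a i)) := by
      funext j
      by_cases hj : j = i
      · subst hj; rw [Function.update_self, hai]
      · rw [Function.update_of_ne hj]
        by_contra hne2
        exact hj ((hmem j).mp (fun h => hne2 h.symm))
    exact ⟨i, by rw [← ha']; exact hv⟩
  · rintro ⟨i, hi⟩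
    refine ⟨Function.update a i (!(a i)), ?_, hi⟩
    rw [hammingDist]
    have hsub : Finset.filter (fun j => a j ≠ Function.update a i (!(a i)) j) Finset.univ
        ⊆ {i} := by
      intro j hj
      simp only [Finset.mem_filter] at hj
      by_contra hji
      simp only [Finset.mem_singleton] at hji
      exact hj.2 (by rw [Function.update_of_ne hji])
    calc _ ≤ ({i} : Finset (Fin (2 ^ n))).card := Finset.card_le_card hsub
      _ = 1 := Finset.card_singleton i
/-- joint probability of (value, pivotality) -/
noncomputable def Q (n : ℕ) (v b : Bool) : ℝ :=
  ∑ a : Fin (2 ^ n) → Bool,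
    if gameValue n a = v ∧ decide (pivP n a) = b then W n a else 0

def valOp (m : ℕ) (v1 v2 : Bool) : Bool := if m % 2 = 1 then v1 && v2 else v1 || v2

def pivOp (m : ℕ) (v1 b1 v2 b2 : Bool) : Bool :=
  if m % 2 = 1 then (v2 && b1 || v1 && b2) else (!v2 && b1 || !v1 && b2)

lemma val_glue' (n : ℕ) (x y : Fin (2 ^ n) → Bool) :
    gameValue (n + 1) (glue n x y) = valOp (n + 1) (gameValue n x) (gameValue n y) := by
  rw [val_glue, valOp]

lemma pivD_glue (n : ℕ) (x y : Fin (2 ^ n) → Bool) :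
    decide (pivP (n + 1) (glue n x y))
      = pivOp (n + 1) (gameValue n x) (decide (pivP n x)) (gameValue n y) (decide (pivP n y)) := by
  by_cases hpar : (n + 1) % 2 = 1
  · simp only [pivOp, if_pos hpar]
    by_cases hx : pivP n x <;> by_cases hy : pivP n y <;>
      cases hvx : gameValue n x <;> cases hvy : gameValue n y <;>
        simp [pivP_glue, hpar, hx, hy, hvx, hvy]
  · simp only [pivOp, if_neg hpar]
    by_cases hx : pivP n x <;> by_cases hy : pivP n y <;>
      cases hvx : gameValue n x <;> cases hvy : gameValue n y <;>
        simp [pivP_glue, hpar, hx, hy, hvx, hvy]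

lemma group1 (n : ℕ) (g : Bool → Bool → ℝ) :
    ∑ a : Fin (2 ^ n) → Bool, g (gameValue n a) (decide (pivP n a)) * W n a
      = ∑ v : Bool, ∑ b : Bool, g v b * Q n v b := by
  have h1 : ∑ v : Bool, ∑ b : Bool, g v b * Q n v b
      = ∑ p : Bool × Bool, ∑ a : Fin (2 ^ n) → Bool,
          (if gameValue n a = p.1 ∧ decide (pivP n a) = p.2 then g p.1 p.2 * W n a else 0) := by
    rw [Fintype.sum_prod_type]
    apply Finset.sum_congr rfl; intro v _
    apply Finset.sum_congr rfl; intro b _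
    rw [Q, Finset.mul_sum]
    apply Finset.sum_congr rfl; intro a _
    split_ifs <;> ring
  rw [h1, Finset.sum_comm]
  apply Finset.sum_congr rfl; intro a _
  rw [Fintype.sum_eq_single (⟨gameValue n a, decide (pivP n a)⟩ : Bool × Bool)]
  · rw [if_pos ⟨rfl, rfl⟩]
  · rintro ⟨v, b⟩ hb
    rw [if_neg]
    rintro ⟨h1, h2⟩
    exact hb (Prod.ext h1.symm h2.symm)

lemma Q_succ (n : ℕ) (v b : Bool) :
    Q (n + 1) v b = ∑ v1 : Bool, ∑ b1 : Bool,
      (∑ v2 : Bool, ∑ b2 : Bool,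
        (if valOp (n + 1) v1 v2 = v ∧ pivOp (n + 1) v1 b1 v2 b2 = b then (1:ℝ) else 0)
          * Q n v2 b2) * Q n v1 b1 := by
  rw [Q, sum_split]
  have h1 : ∀ x y : Fin (2 ^ n) → Bool,
      (if gameValue (n + 1) (glue n x y) = v ∧ decide (pivP (n + 1) (glue n x y)) = b
        then W (n + 1) (glue n x y) else 0)
      = (if valOp (n + 1) (gameValue n x) (gameValue n y) = v ∧
            pivOp (n + 1) (gameValue n x) (decide (pivP n x)) (gameValue n y) (decide (pivP n y)) = b
        then (1:ℝ) else 0) * W n y * W n x := by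
    intro x y
    rw [val_glue', pivD_glue, W_glue]
    split_ifs <;> ring
  simp_rw [h1]
  have h2 : ∀ x : Fin (2 ^ n) → Bool,
      (∑ y : Fin (2 ^ n) → Bool,
        (if valOp (n + 1) (gameValue n x) (gameValue n y) = v ∧
            pivOp (n + 1) (gameValue n x) (decide (pivP n x)) (gameValue n y) (decide (pivP n y)) = b
          then (1:ℝ) else 0) * W n y * W n x)
      = (∑ v2 : Bool, ∑ b2 : Bool,
          (if valOp (n + 1) (gameValue n x) v2 = v ∧
              pivOp (n + 1) (gameValue n x) (decide (pivP n x)) v2 b2 = b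
            then (1:ℝ) else 0) * Q n v2 b2) * W n x := by
    intro x
    rw [← Finset.sum_mul, ← group1 n (fun v2 b2 =>
      (if valOp (n + 1) (gameValue n x) v2 = v ∧
          pivOp (n + 1) (gameValue n x) (decide (pivP n x)) v2 b2 = b then (1:ℝ) else 0))]
  simp_rw [h2]
  exact group1 n (fun v1 b1 => ∑ v2 : Bool, ∑ b2 : Bool,
    (if valOp (n + 1) v1 v2 = v ∧ pivOp (n + 1) v1 b1 v2 b2 = b then (1:ℝ) else 0) * Q n v2 b2)
lemma Q_nonneg (n : ℕ) (v b : Bool) : 0 ≤ Q n v b := by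
  apply Finset.sum_nonneg; intro a _
  have hW : 0 ≤ W n a := by
    apply Finset.prod_nonneg; intro i _
    split_ifs
    · exact le_of_lt phi_pos
    · nlinarith [phi_lt_one]
  split_ifs <;> simp [hW]

lemma Q_total (n : ℕ) :
    Q n true true + Q n true false + Q n false true + Q n false false = 1 := by
  have h := group1 n (fun _ _ => 1)
  simp only [one_mul, Fintype.sum_bool] at h
  have h2 := W_total n
  linarith [h, h2]

lemma Q_zero_b_false (v : Bool) : Q 0 v false = 0 := by
  apply Finset.sum_eq_zero; intro a _
  rw [if_neg]
  rintro ⟨-, h2⟩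
  simp [pivP_zero a] at h2

lemma W_zero (a : Fin (2 ^ 0) → Bool) : W 0 a = if a default then phi else 1 - phi := by
  haveI : Unique (Fin (2 ^ 0)) := inferInstanceAs (Unique (Fin 1))
  rw [W, Fintype.prod_unique (fun i : Fin (2 ^ 0) => if a i = true then phi else 1 - phi)]
  exact congrArg (fun z => if a z = true then phi else 1 - phi) (Subsingleton.elim _ _)

lemma Q_zero_true_true : Q 0 true true = phi := by
  haveI : Unique (Fin (2 ^ 0)) := inferInstanceAs (Unique (Fin 1))
  have key : ∀ a : Fin (2 ^ 0) → Bool,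
      (if gameValue 0 a = true ∧ decide (pivP 0 a) = true then W 0 a else 0)
        = if a default = true then phi else 0 := by
    intro a
    have hg : gameValue 0 a = a default := by
      rw [gameValue]; exact congrArg a (Subsingleton.elim _ _)
    rw [W_zero, hg]
    cases hb : a default <;> simp [pivP_zero a, hb]
  rw [Q]
  simp_rw [key]
  have h2 : (∑ x : Fin (2 ^ 0) → Bool, if x default = true then phi else 0)
      = ∑ b : Bool, if b = true then phi else 0 :=
    Fintype.sum_equiv (Equiv.funUnique (Fin (2 ^ 0)) Bool) _ _
      (fun a => by
        have hb2 : ∀ z : Fin (2 ^ 0), a z = a default :=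
          fun z => congrArg a (Subsingleton.elim _ _)
        simp [Equiv.funUnique, hb2])
  rw [h2]
  simp

lemma Q_zero_false_true : Q 0 false true = 1 - phi := by
  have h := Q_total 0
  rw [Q_zero_b_false true, Q_zero_b_false false, Q_zero_true_true] at h
  linarith

lemma rec_even_tf {n : ℕ} (hn : n % 2 = 0) :
    Q (n + 1) true false = Q n true false ^ 2 := by
  have hpar : (n + 1) % 2 = 1 := by omega
  rw [Q_succ]
  simp only [Fintype.sum_bool, valOp, pivOp, hpar, if_true, if_pos]
  norm_num
  ring

lemma rec_even_ff {n : ℕ} (hn : n % 2 = 0) :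
    Q (n + 1) false false = 2 * (Q n true true + Q n true false) * Q n false false
      + (Q n false true + Q n false false) ^ 2 := by
  have hpar : (n + 1) % 2 = 1 := by omega
  rw [Q_succ]
  simp only [Fintype.sum_bool, valOp, pivOp, hpar, if_true, if_pos]
  norm_num
  ring

lemma rec_even_t {n : ℕ} (hn : n % 2 = 0) :
    Q (n + 1) true true + Q (n + 1) true false
      = (Q n true true + Q n true false) ^ 2 := by
  have hpar : (n + 1) % 2 = 1 := by omega
  rw [Q_succ, Q_succ]
  simp only [Fintype.sum_bool, valOp, pivOp, hpar, if_true, if_pos]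
  norm_num
  ring

lemma rec_odd_tf {n : ℕ} (hn : n % 2 = 1) :
    Q (n + 1) true false = 2 * (Q n false true + Q n false false) * Q n true false
      + (Q n true true + Q n true false) ^ 2 := by
  have hpar : ¬ ((n + 1) % 2 = 1) := by omega
  rw [Q_succ]
  simp only [Fintype.sum_bool, valOp, pivOp, if_neg hpar]
  norm_num
  ring

lemma rec_odd_ff {n : ℕ} (hn : n % 2 = 1) :
    Q (n + 1) false false = Q n false false ^ 2 := by
  have hpar : ¬ ((n + 1) % 2 = 1) := by omega
  rw [Q_succ]
  simp only [Fintype.sum_bool, valOp, pivOp, if_neg hpar]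
  norm_num
  ring

lemma rec_odd_t {n : ℕ} (hn : n % 2 = 1) :
    Q (n + 1) true true + Q (n + 1) true false
      = 2 * (Q n false true + Q n false false) * (Q n true true + Q n true false)
        + (Q n true true + Q n true false) ^ 2 := by
  have hpar : ¬ ((n + 1) % 2 = 1) := by omega
  rw [Q_succ, Q_succ]
  simp only [Fintype.sum_bool, valOp, pivOp, if_neg hpar]
  norm_num
  ring

lemma Q_true_sum (n : ℕ) :
    Q n true true + Q n true false = if n % 2 = 0 then phi else phi ^ 2 := by
  induction n with
  | zero => simp [Q_zero_true_true, Q_zero_b_false]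
  | succ n ih =>
    rcases Nat.even_or_odd n with he | ho
    · have hn : n % 2 = 0 := Nat.even_iff.mp he
      have hn1 : ¬ ((n + 1) % 2 = 0) := by omega
      rw [rec_even_t hn, ih, if_pos hn, if_neg hn1]
    · have hn : n % 2 = 1 := Nat.odd_iff.mp ho
      have hn1 : (n + 1) % 2 = 0 := by omega
      have htot := Q_total n
      rw [rec_odd_t hn, ih, if_neg (by omega : ¬ n % 2 = 0), if_pos hn1]
      have hfs : Q n false true + Q n false false = 1 - phi ^ 2 := by
        rw [ih, if_neg (by omega : ¬ n % 2 = 0)] at htot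
        linarith
      rw [hfs]
      nlinarith [phi_sq]

lemma fragProb_eq (n : ℕ) :
    fragProb n 1 phi = 1 - Q n true false - Q n false false := by
  have h1 : fragProb n 1 phi
      = ∑ a : Fin (2 ^ n) → Bool, if pivP n a then W n a else 0 := by
    rw [fragProb, prob]
    apply Finset.sum_congr rfl; intro a _
    by_cases h : pivP n a
    · rw [Set.indicator_of_mem (show a ∈ {a | Fragile n 1 a} from (fragile_iff n a).mpr h),
        if_pos h]
      rfl
    · rw [Set.indicator_of_notMem
        (show a ∉ {a | Fragile n 1 a} from fun hc => h ((fragile_iff n a).mp hc)), if_neg h]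
  have h2 : Q n true true + Q n false true
      = ∑ a : Fin (2 ^ n) → Bool, if pivP n a then W n a else 0 := by
    rw [Q, Q, ← Finset.sum_add_distrib]
    apply Finset.sum_congr rfl; intro a _
    by_cases h : pivP n a <;> cases hv : gameValue n a <;> simp [h, hv]
  have htot := Q_total n
  rw [h1, ← h2]
  linarith
lemma step_b_even {n : ℕ} (hn : n % 2 = 0) :
    Q (n + 1) true false = Q n true false ^ 2 := rec_even_tf hn

lemma step_d_even {n : ℕ} (hn : n % 2 = 0) :
    Q (n + 1) false false = 2 * phi * Q n false false + phi ^ 4 := by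
  rw [rec_even_ff hn]
  have h1 : Q n true true + Q n true false = phi := by rw [Q_true_sum, if_pos hn]
  have h2 : Q n false true + Q n false false = 1 - phi := by
    have := Q_total n; linarith
  rw [h1, h2, show (1 - phi) ^ 2 = phi ^ 4 by rw [← phi_sq]; ring]

lemma step_b_odd {n : ℕ} (hn : n % 2 = 1) :
    Q (n + 1) true false = 2 * phi * Q n true false + phi ^ 4 := by
  rw [rec_odd_tf hn]
  have h1 : Q n true true + Q n true false = phi ^ 2 := by
    rw [Q_true_sum, if_neg (by omega : ¬ n % 2 = 0)]
  have h2 : Q n false true + Q n false false = phi := by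
    have := Q_total n; have := phi_sq; linarith
  rw [h1, h2]; ring

lemma step_d_odd {n : ℕ} (hn : n % 2 = 1) :
    Q (n + 1) false false = Q n false false ^ 2 := rec_odd_ff hn

/-- fixed-point identity -/
lemma fp : 2 * phi * (phi ^ 2 / 2) ^ 2 + phi ^ 4 = phi ^ 2 / 2 := by
  linear_combination (phi ^ 3 / 2 + phi ^ 2 / 2) * phi_sq

lemma contraction : 2 * phi ^ 3 ≤ 1 / 2 := by
  nlinarith [phi_pos, phi_le, pow_le_pow_left₀ (le_of_lt phi_pos) phi_le 3]

lemma even_bounds (k : ℕ) :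
    (Q (2 * k) true false ≤ phi ^ 2 / 2 ∧ phi ^ 2 / 2 - Q (2 * k) true false ≤ (1/2) ^ k)
    ∧ (Q (2 * k) false false ≤ phi ^ 4 / 4 ∧ phi ^ 4 / 4 - Q (2 * k) false false ≤ (1/2) ^ k) := by
  induction k with
  | zero =>
    simp only [Nat.mul_zero, Q_zero_b_false, pow_zero]
    have hs := phi_sq
    have hp := phi_pos
    refine ⟨⟨by nlinarith, by nlinarith⟩, ⟨by nlinarith, by nlinarith⟩⟩
  | succ k ih =>
    obtain ⟨⟨hb1, hb2⟩, ⟨hd1, hd2⟩⟩ := ih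
    have hbnn := Q_nonneg (2 * k) true false
    have hdnn := Q_nonneg (2 * k) false false
    set b := Q (2 * k) true false with hbdef
    set d := Q (2 * k) false false with hddef
    have e1 : Q (2 * k + 1) true false = b ^ 2 := step_b_even (by omega)
    have e2 : Q (2 * k + 1) false false = 2 * phi * d + phi ^ 4 := step_d_even (by omega)
    have hidx : 2 * (k + 1) = (2 * k + 1) + 1 := by ring
    have e3 : Q (2 * (k + 1)) true false = 2 * phi * (b ^ 2) + phi ^ 4 := by
      rw [hidx, step_b_odd (by omega), e1]
    have e4 : Q (2 * (k + 1)) false false = (2 * phi * d + phi ^ 4) ^ 2 := by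
      rw [hidx, step_d_odd (by omega), e2]
    rw [e3, e4]
    have hs := phi_sq
    have hp := phi_pos
    have h58 := phi_le
    have hpk : (0:ℝ) ≤ (1/2) ^ k := by positivity
    have hbb : b ^ 2 ≤ (phi ^ 2 / 2) ^ 2 := pow_le_pow_left₀ hbnn hb1 2
    have hub : 2 * phi * d + phi ^ 4 ≤ phi ^ 2 / 2 := by nlinarith [fp, hd1, hp]
    have hlb : (0:ℝ) ≤ 2 * phi * d + phi ^ 4 := by positivity
    refine ⟨⟨?_, ?_⟩, ⟨?_, ?_⟩⟩
    · nlinarith [fp, hbb, hp]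
    · -- contraction for b
      have key : phi ^ 2 / 2 - (2 * phi * (b ^ 2) + phi ^ 4)
          = 2 * phi * (phi ^ 2 / 2 - b) * (phi ^ 2 / 2 + b) := by
        linear_combination (- phi ^ 3 / 2 - phi ^ 2 / 2) * phi_sq
      have hε0 : (0:ℝ) ≤ phi ^ 2 / 2 - b := by linarith
      have h1 : phi ^ 2 / 2 + b ≤ phi ^ 2 := by linarith
      have h2 : 2 * phi * (phi ^ 2 / 2 - b) * (phi ^ 2 / 2 + b)
          ≤ 2 * phi * (phi ^ 2 / 2 - b) * phi ^ 2 :=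
        mul_le_mul_of_nonneg_left h1 (by positivity)
      have h5 : (2 * phi ^ 3) * (phi ^ 2 / 2 - b) ≤ (1/2) * (1/2) ^ k :=
        mul_le_mul contraction hb2 hε0 (by norm_num)
      calc phi ^ 2 / 2 - (2 * phi * (b ^ 2) + phi ^ 4)
          = 2 * phi * (phi ^ 2 / 2 - b) * (phi ^ 2 / 2 + b) := key
        _ ≤ 2 * phi * (phi ^ 2 / 2 - b) * phi ^ 2 := h2
        _ = (2 * phi ^ 3) * (phi ^ 2 / 2 - b) := by ring
        _ ≤ (1/2) * (1/2) ^ k := h5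
        _ = (1/2) ^ (k + 1) := by ring
    · calc (2 * phi * d + phi ^ 4) ^ 2 ≤ (phi ^ 2 / 2) ^ 2 := pow_le_pow_left₀ hlb hub 2
        _ = phi ^ 4 / 4 := by ring
    · -- contraction for d
      have key2 : phi ^ 2 / 2 - (2 * phi * d + phi ^ 4) = 2 * phi * (phi ^ 4 / 4 - d) := by
        linear_combination (- phi ^ 3 / 2 - phi ^ 2 / 2) * phi_sq
      have hε0 : (0:ℝ) ≤ phi ^ 4 / 4 - d := by linarith
      have h1 : phi ^ 2 / 2 + (2 * phi * d + phi ^ 4) ≤ phi ^ 2 := by linarith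
      have h5 : (2 * phi ^ 3) * (phi ^ 4 / 4 - d) ≤ (1/2) * (1/2) ^ k :=
        mul_le_mul contraction hd2 hε0 (by norm_num)
      calc phi ^ 4 / 4 - (2 * phi * d + phi ^ 4) ^ 2
          = (phi ^ 2 / 2 - (2 * phi * d + phi ^ 4))
              * (phi ^ 2 / 2 + (2 * phi * d + phi ^ 4)) := by ring
        _ = 2 * phi * (phi ^ 4 / 4 - d) * (phi ^ 2 / 2 + (2 * phi * d + phi ^ 4)) := by
            rw [key2]
        _ ≤ 2 * phi * (phi ^ 4 / 4 - d) * phi ^ 2 :=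
            mul_le_mul_of_nonneg_left h1 (by positivity)
        _ = (2 * phi ^ 3) * (phi ^ 4 / 4 - d) := by ring
        _ ≤ (1/2) * (1/2) ^ k := h5
        _ = (1/2) ^ (k + 1) := by ring

lemma frag_bound (n : ℕ) :
    |fragProb n 1 phi - (1 - phi ^ 2 / 2 - phi ^ 4 / 4)| ≤ 3 * (1/2) ^ (n / 2) := by
  rw [fragProb_eq]
  have hs := phi_sq
  have hp := phi_pos
  have h58 := phi_le
  rcases Nat.even_or_odd n with he | ho
  · obtain ⟨k, hk⟩ := he
    have hn : n = 2 * k := by omega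
    subst hn
    have hdiv : 2 * k / 2 = k := by omega
    rw [hdiv]
    obtain ⟨⟨hb1, hb2⟩, ⟨hd1, hd2⟩⟩ := even_bounds k
    have hpk : (0:ℝ) ≤ (1/2) ^ k := by positivity
    rw [abs_le]
    constructor <;> linarith
  · obtain ⟨k, hk⟩ := ho
    subst hk
    have hdiv : (2 * k + 1) / 2 = k := by omega
    rw [hdiv]
    obtain ⟨⟨hb1, hb2⟩, ⟨hd1, hd2⟩⟩ := even_bounds k
    have hbnn := Q_nonneg (2 * k) true false
    have hdnn := Q_nonneg (2 * k) false false
    set b := Q (2 * k) true false with hbdef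
    set d := Q (2 * k) false false with hddef
    have e1 : Q (2 * k + 1) true false = b ^ 2 := step_b_even (by omega)
    have e2 : Q (2 * k + 1) false false = 2 * phi * d + phi ^ 4 := step_d_even (by omega)
    rw [e1, e2]
    have hpk : (0:ℝ) ≤ (1/2) ^ k := by positivity
    have hiden : phi ^ 2 / 2 + phi ^ 4 / 4 - (b ^ 2 + (2 * phi * d + phi ^ 4))
        = (phi ^ 2 / 2 - b) * (phi ^ 2 / 2 + b) + 2 * phi * (phi ^ 4 / 4 - d) := by
      linear_combination (- phi ^ 3 / 2 - phi ^ 2 / 2) * phi_sq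
    have hbb : b ^ 2 ≤ phi ^ 4 / 4 := by
      calc b ^ 2 ≤ (phi ^ 2 / 2) ^ 2 := pow_le_pow_left₀ hbnn hb1 2
        _ = phi ^ 4 / 4 := by ring
    have hub : 2 * phi * d + phi ^ 4 ≤ phi ^ 2 / 2 := by nlinarith [fp, hd1, hp]
    have ht1 : (phi ^ 2 / 2 - b) * (phi ^ 2 / 2 + b) ≤ (1/2) ^ k * 1 := by
      apply mul_le_mul hb2 _ (by linarith) hpk
      nlinarith [hp]
    have ht2 : 2 * phi * (phi ^ 4 / 4 - d) ≤ 2 * (1/2) ^ k := by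
      have : 2 * phi ≤ 2 := by linarith [phi_lt_one]
      calc 2 * phi * (phi ^ 4 / 4 - d) ≤ 2 * (phi ^ 4 / 4 - d) := by nlinarith [hp]
        _ ≤ 2 * (1/2) ^ k := by linarith
    rw [abs_le]
    have hm1 : (0:ℝ) ≤ (phi ^ 2 / 2 - b) * (phi ^ 2 / 2 + b) :=
      mul_nonneg (by linarith) (by linarith)
    have hm2 : (0:ℝ) ≤ 2 * phi * (phi ^ 4 / 4 - d) :=
      mul_nonneg (by linarith) (by linarith)
    constructor
    · linarith [hiden, hm1, hm2]
    · linarith [hiden, ht1, ht2]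

lemma main_tendsto :
    Tendsto (fun n => fragProb n 1 phi) atTop (𝓝 (1 - phi ^ 2 / 2 - phi ^ 4 / 4)) := by
  rw [← tendsto_sub_nhds_zero_iff]
  have hG : Tendsto (fun n : ℕ => 3 * ((1:ℝ)/2) ^ (n / 2)) atTop (𝓝 0) := by
    have h1 : Tendsto (fun k : ℕ => ((1:ℝ)/2) ^ k) atTop (𝓝 0) :=
      tendsto_pow_atTop_nhds_zero_of_lt_one (by norm_num) (by norm_num)
    have h2 : Tendsto (fun n : ℕ => n / 2) atTop atTop := by
      apply Filter.tendsto_atTop_atTop.2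
      intro b
      exact ⟨2 * b, fun n hn => by omega⟩
    have h3 := (h1.comp h2).const_mul (3:ℝ)
    simpa using h3
  exact squeeze_zero_norm (fun n => by
    simpa [Real.norm_eq_abs] using frag_bound n) hG

/-- The asymptotic probability of 1-fragility of a golden game exists and equals
`1 − φ·ξ − φ²·ξ²`, where `ξ` is the unique root in `(0,1)` of `x = φ³ + 2φ²x²`. -/
theorem asymptotic_one_fragility :
    ∃ ξ : ℝ, ξ ∈ Set.Ioo (0 : ℝ) 1 ∧ ξ = phi ^ 3 + 2 * phi ^ 2 * ξ ^ 2 ∧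
      (∀ y ∈ Set.Ioo (0 : ℝ) 1, y = phi ^ 3 + 2 * phi ^ 2 * y ^ 2 → y = ξ) ∧
      Tendsto (fun n => fragProb n 1 phi) atTop (𝓝 (1 - phi * ξ - phi ^ 2 * ξ ^ 2)) := by
  refine ⟨phi / 2, ⟨by linarith [phi_pos], by linarith [phi_lt_one]⟩, ?_, ?_, ?_⟩
  · linear_combination (- phi ^ 2 / 2 - phi / 2) * phi_sq
  · rintro y ⟨hy0, hy1⟩ hy
    have hfact : 2 * phi ^ 2 * (y - phi / 2) * (y - 1) = 0 := by
      linear_combination (-1 : ℝ) * hy + (- (phi + 1) * y) * phi_sq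
    rcases mul_eq_zero.mp hfact with h | h
    · rcases mul_eq_zero.mp h with h2 | h2
      · have hpos : 0 < 2 * phi ^ 2 := by nlinarith [phi_pos]
        exact absurd h2 (ne_of_gt hpos)
      · linarith
    · linarith
  · have hv : 1 - phi * (phi / 2) - phi ^ 2 * (phi / 2) ^ 2
        = 1 - phi ^ 2 / 2 - phi ^ 4 / 4 := by ring
    rw [hv]
    exact main_tendsto
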